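/- Let z, w be complex numbers in the open unit disk and let λ be a complex number such that |λ| ≤ (1 + max(|z|,|w|)) / (2 * max(|z|,|w|)) (with max(|z|,|w|) > 0). Then λz and λw lie in the open unit disk and ρ(λz, λw) ≤ 2 * |λ| * ρ(z, w), where ρ(a,b) = |a - b| / |1 - conj(a)*b| is the pseudohyperbolic distance on the disk. -/

import Mathlib

/-- The pseudohyperbolic distance on the open unit disk. -/
noncomputable def pseudoDist (a b : ℂ) : ℝ :=
  ‖(a - b) / (1 - (starRingEnd ℂ) a * b)‖

set_option maxHeartbeats 1000000 in
theorem stmt3 (z w lam : ℂ) (hz : ‖z‖ < 1) (hw : ‖w‖ < 1)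
    (hmax : 0 < max (‖z‖) (‖w‖))
    (hlam : ‖lam‖ ≤
      (1 + max (‖z‖) (‖w‖)) / (2 * max (‖z‖) (‖w‖))) :
    ‖lam * z‖ < 1 ∧ ‖lam * w‖ < 1 ∧
      pseudoDist (lam * z) (lam * w) ≤ 2 * ‖lam‖ * pseudoDist z w := by
  set m := max (‖z‖) (‖w‖) with hmdef
  have hzm : ‖z‖ ≤ m := le_max_left _ _
  have hwm : ‖w‖ ≤ m := le_max_right _ _
  have hm1 : m < 1 := max_lt hz hw
  have hL0 : 0 ≤ ‖lam‖ := norm_nonneg _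
  have hLm : ‖lam‖ * m ≤ (1 + m) / 2 := by
    have h := mul_le_mul_of_nonneg_right hlam (le_of_lt hmax)
    have he : (1 + m) / (2 * m) * m = (1 + m) / 2 := by
      field_simp
    rw [he] at h; exact h
  have h1 : ‖lam * z‖ < 1 := by
    rw [norm_mul]
    have : ‖lam‖ * ‖z‖ ≤ ‖lam‖ * m :=
      mul_le_mul_of_nonneg_left hzm hL0
    linarith
  have h2 : ‖lam * w‖ < 1 := by
    rw [norm_mul]
    have : ‖lam‖ * ‖w‖ ≤ ‖lam‖ * m :=
      mul_le_mul_of_nonneg_left hwm hL0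
    linarith
  refine ⟨h1, h2, ?_⟩
  set L := ‖lam‖ with hLdef
  set t : ℝ := L ^ 2 with htdef
  set u : ℂ := (starRingEnd ℂ) z * w with hudef
  have ht0 : 0 ≤ t := sq_nonneg _
  set U : ℝ := ‖u‖ with hUdef
  have hU0 : 0 ≤ U := norm_nonneg _
  have hUm : U ≤ m * m := by
    rw [hUdef, hudef, norm_mul, Complex.norm_conj]
    exact mul_le_mul hzm hwm (norm_nonneg _) (le_trans (norm_nonneg _) hzm)
  have hU1 : U < 1 := lt_of_le_of_lt hUm (by nlinarith [hmax])
  have htm : t * (m * m) ≤ (1 + m) ^ 2 / 4 := by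
    have := mul_le_mul hLm hLm (by positivity) (by linarith)
    nlinarith [this]
  have htU : t * U < 1 := by
    have : t * U ≤ t * (m * m) := mul_le_mul_of_nonneg_left hUm ht0
    nlinarith
  -- key complex identity
  have hconjlam : (starRingEnd ℂ) lam * lam = ((t : ℝ) : ℂ) := by
    rw [htdef, hLdef]
    rw [mul_comm, Complex.mul_conj]
    norm_cast
    rw [Complex.sq_norm]
  have hkey : (starRingEnd ℂ) (lam * z) * (lam * w) = ((t : ℝ) : ℂ) * u := by
    rw [map_mul, hudef, ← hconjlam]; ring
  set Dt : ℝ := ‖1 - ((t : ℝ) : ℂ) * u‖ with hDtdef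
  set D1 : ℝ := ‖1 - u‖ with hD1def
  have habs_tu : ‖((t : ℝ) : ℂ) * u‖ = t * U := by
    rw [norm_mul, Complex.norm_real, Real.norm_eq_abs, abs_of_nonneg ht0, hUdef]
  have hDt_lb : 1 - t * U ≤ Dt := by
    have h := norm_sub_norm_le (1 : ℂ) (((t : ℝ) : ℂ) * u)
    simp only [norm_one] at h
    rw [habs_tu] at h
    exact h
  have hDt0 : 0 < Dt := lt_of_lt_of_le (by linarith) hDt_lb
  have hD1_lb : 1 - U ≤ D1 := by
    have h := norm_sub_norm_le (1 : ℂ) u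
    simp only [norm_one] at h
    exact h
  have hD10 : 0 < D1 := lt_of_lt_of_le (by linarith) hD1_lb
  -- triangle inequality
  have htri : D1 ≤ Dt + |t - 1| * U := by
    have heq : (1 : ℂ) - u = (1 - ((t : ℝ) : ℂ) * u) + (((t - 1 : ℝ) : ℂ)) * u := by
      push_cast; ring
    calc D1 = ‖(1 - ((t : ℝ) : ℂ) * u) + (((t - 1 : ℝ) : ℂ)) * u‖ := by
          rw [hD1def, heq]
      _ ≤ Dt + ‖(((t - 1 : ℝ) : ℂ)) * u‖ := norm_add_le _ _
      _ = Dt + |t - 1| * U := by rw [norm_mul, Complex.norm_real, Real.norm_eq_abs, hUdef]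
  -- main real inequality
  have hmain : D1 ≤ 2 * Dt := by
    rcases le_or_gt t 1 with hc | hc
    · have habs : |t - 1| = 1 - t := by rw [abs_of_nonpos (by linarith)]; ring
      rw [habs] at htri
      have hx : (1 - t) * U ≤ Dt := by nlinarith [hDt_lb]
      linarith
    · have habs : |t - 1| = t - 1 := abs_of_pos (by linarith)
      rw [habs] at htri
      have h2 : (t - 1) * U ≤ (t - 1) * (m * m) :=
        mul_le_mul_of_nonneg_left hUm (by linarith)
      have ha : 2 * ((t - 1) * (m * m)) ≤ 1 - m * m := by nlinarith [htm, sq_nonneg (m - 1)]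
      have hb : 1 - m * m ≤ D1 := by linarith [hD1_lb, hUm]
      have hc : 2 * ((t - 1) * U) ≤ D1 := by linarith
      linarith
  -- assemble
  have hpd1 : pseudoDist (lam * z) (lam * w) = L * ‖z - w‖ / Dt := by
    rw [pseudoDist, hkey, hDtdef]
    rw [norm_div]
    congr 1
    rw [show lam * z - lam * w = lam * (z - w) by ring, norm_mul, hLdef]
  have hpd2 : pseudoDist z w = ‖z - w‖ / D1 := by
    rw [pseudoDist, norm_div, hD1def, hudef]
  rw [hpd1, hpd2]
  have hA0 : 0 ≤ ‖z - w‖ := norm_nonneg _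
  have hr : 2 * L * (‖z - w‖ / D1) = 2 * L * ‖z - w‖ / D1 := by
    ring
  rw [hr, div_le_div_iff₀ hDt0 hD10]
  nlinarith [mul_le_mul_of_nonneg_left hmain (mul_nonneg hL0 hA0)]
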